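/- arXiv:2511.22376 — 3 statements merged into one kernel-verified Lean document; each statement's English description precedes it below -/
import Mathlib

section
/- Given a tree T ⊆ ℕ^{<ℕ} (a set of finite sequences closed under prefixes), define the AF F_T with arguments {a_σ : σ ∈ T} ∪ {b_σ : σ ∈ T}, attacks b_σ → a_{σ⁻} for each σ with immediate predecessor σ⁻, and a_σ → b_σ. Then for every ordinal β, a_σ ∈ G_{β+1} if and only if σ is ranked in T with rank at most β. -/
def defenseFn {A : Type*} (att : A → A → Prop) (S : Set A) : Set A :=
  {x | ∀ y, att y x → ∃ z ∈ S, att z y}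

/-- `G` is the transfinite iteration of the defense function from `∅`. -/
def IsIter {A : Type*} (att : A → A → Prop) (G : Ordinal → Set A) : Prop :=
  G 0 = ∅ ∧ (∀ β : Ordinal, G (β + 1) = defenseFn att (G β)) ∧
    ∀ l : Ordinal, Order.IsSuccLimit l → G l = ⋃ β ∈ Set.Iio l, G β

/-- A tree: a prefix-closed set of finite sequences of naturals. -/
def IsTree (T : Set (List ℕ)) : Prop := ∀ σ ∈ T, ∀ τ : List ℕ, τ <+: σ → τ ∈ T

/-- `RankLE T σ β` : `σ` is ranked in `T` with rank at most `β`
(every child of `σ` in `T` has rank strictly less than `β`). -/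
inductive RankLE (T : Set (List ℕ)) : List ℕ → Ordinal → Prop
  | intro (σ : List ℕ) (β : Ordinal) (g : ℕ → Ordinal)
      (hlt : ∀ n : ℕ, σ ++ [n] ∈ T → g n < β)
      (h : ∀ n : ℕ, σ ++ [n] ∈ T → RankLE T (σ ++ [n]) (g n)) : RankLE T σ β

/-- The AF `F_T` built from a tree `T`: arguments are `(false, σ)` (the `a_σ`'s)
and `(true, σ)` (the `b_σ`'s) for `σ ∈ T`; `b_σ` attacks `a_{σ⁻}` and `a_σ` attacks `b_σ`. -/
def ftAtt (T : Set (List ℕ)) : Bool × List ℕ → Bool × List ℕ → Prop := fun x y =>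
  (x.2 ∈ T ∧ x.1 = true ∧ y.1 = false ∧ x.2 ≠ [] ∧ y.2 = x.2.dropLast) ∨
  (x.2 ∈ T ∧ x.1 = false ∧ y.1 = true ∧ y.2 = x.2)

lemma ord_lt_add_one (a : Ordinal) : a < a + 1 := by
  rw [Ordinal.add_one_eq_succ]; exact Order.lt_succ a

lemma ord_lt_add_one_iff {a b : Ordinal} : a < b + 1 ↔ a ≤ b := by
  rw [Ordinal.add_one_eq_succ]; exact Order.lt_succ_iff

lemma defenseFn_mono {A : Type*} (att : A → A → Prop) {S S' : Set A} (h : S ⊆ S') :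
    defenseFn att S ⊆ defenseFn att S' := by
  intro x hx y hy
  obtain ⟨z, hz, hzy⟩ := hx y hy
  exact ⟨z, h hz, hzy⟩

lemma G_mono {A : Type*} (att : A → A → Prop) (G : Ordinal → Set A) (hG : IsIter att G) :
    ∀ δ γ, γ ≤ δ → G γ ⊆ G δ := by
  obtain ⟨h0, hs, hl⟩ := hG
  intro δ
  induction δ using Ordinal.induction with
  | _ δ IH =>
    intro γ hγ
    rcases eq_or_lt_of_le hγ with rfl | hγ
    · exact subset_rfl
    rcases Ordinal.zero_or_succ_or_isSuccLimit δ with rfl | ⟨ε, rfl⟩ | hlim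
    · exact absurd hγ (not_lt_zero (a := γ))
    · simp only [← Ordinal.add_one_eq_succ] at IH hγ ⊢
      have hγε : γ ≤ ε := ord_lt_add_one_iff.mp hγ
      have h1 : G γ ⊆ G ε := IH ε (ord_lt_add_one ε) γ hγε
      refine h1.trans ?_
      have key : ∀ ε' : Ordinal, ε' < ε + 1 → G ε' ⊆ G (ε' + 1) := by
        intro ε' hε'
        induction ε' using Ordinal.induction with
        | _ ε' IH2 =>
        rcases Ordinal.zero_or_succ_or_isSuccLimit ε' with rfl | ⟨ζ, rfl⟩ | hlim'
        · rw [h0]; exact Set.empty_subset _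
        · simp only [← Ordinal.add_one_eq_succ] at hε' ⊢
          rw [hs ζ, hs (ζ + 1)]
          exact defenseFn_mono att
            (IH2 ζ (ord_lt_add_one ζ) ((ord_lt_add_one ζ).trans hε'))
        · intro x hx
          rw [hl ε' hlim'] at hx
          simp only [Set.mem_iUnion, Set.mem_Iio, exists_prop] at hx
          obtain ⟨γ', hγ', hx⟩ := hx
          have hγ'1 : γ' + 1 < ε' := by
            rw [Ordinal.add_one_eq_succ]; exact hlim'.succ_lt hγ'
          have h2 : x ∈ G (γ' + 1) :=
            IH (γ' + 1) (hγ'1.trans hε') γ' (ord_lt_add_one γ').le hx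
          rw [hs γ'] at h2
          rw [hs ε']
          refine defenseFn_mono att ?_ h2
          intro w hw
          rw [hl ε' hlim']
          simp only [Set.mem_iUnion, Set.mem_Iio, exists_prop]
          exact ⟨γ', hγ', hw⟩
      exact key ε (ord_lt_add_one ε)
    · intro x hx
      rw [hl δ hlim]
      simp only [Set.mem_iUnion, Set.mem_Iio, exists_prop]
      exact ⟨γ, hγ, hx⟩

lemma mem_succ_of_mem {A : Type*} (att : A → A → Prop) (G : Ordinal → Set A)
    (hG : IsIter att G) : ∀ β : Ordinal, ∀ x, x ∈ G β → ∃ γ < β, x ∈ G (γ + 1) := by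
  obtain ⟨h0, hs, hl⟩ := hG
  intro β
  induction β using Ordinal.induction with
  | _ β IH =>
    intro x hx
    rcases Ordinal.zero_or_succ_or_isSuccLimit β with rfl | ⟨γ, rfl⟩ | hlim
    · rw [h0] at hx; exact absurd hx (Set.notMem_empty x)
    · simp only [← Ordinal.add_one_eq_succ] at hx ⊢
      exact ⟨γ, ord_lt_add_one γ, hx⟩
    · rw [hl β hlim] at hx
      simp only [Set.mem_iUnion, Set.mem_Iio, exists_prop] at hx
      obtain ⟨γ', hγ', hx⟩ := hx
      obtain ⟨γ, hγ, hx⟩ := IH γ' hγ' x hx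
      exact ⟨γ, hγ.trans hγ', hx⟩

lemma rankLE_iff (T : Set (List ℕ)) (σ : List ℕ) (β : Ordinal) :
    RankLE T σ β ↔ ∀ n : ℕ, σ ++ [n] ∈ T → ∃ γ < β, RankLE T (σ ++ [n]) γ := by
  constructor
  · rintro ⟨_, _, g, hlt, h⟩ n hn
    exact ⟨g n, hlt n hn, h n hn⟩
  · intro h
    have h' : ∀ n : ℕ, ∃ γ : Ordinal, σ ++ [n] ∈ T → γ < β ∧ RankLE T (σ ++ [n]) γ := by
      intro n
      by_cases hn : σ ++ [n] ∈ T
      · obtain ⟨γ, hγ, hr⟩ := h n hn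
        exact ⟨γ, fun _ => ⟨hγ, hr⟩⟩
      · exact ⟨0, fun hc => absurd hc hn⟩
    choose g hg using h'
    exact RankLE.intro σ β g (fun n hn => (hg n hn).1) (fun n hn => (hg n hn).2)

lemma defense_char (T : Set (List ℕ)) (S : Set (Bool × List ℕ)) (σ : List ℕ) :
    (false, σ) ∈ defenseFn (ftAtt T) S ↔
      ∀ n : ℕ, σ ++ [n] ∈ T → (false, σ ++ [n]) ∈ S := by
  constructor
  · intro h n hn
    have hatt : ftAtt T (true, σ ++ [n]) (false, σ) :=
      Or.inl ⟨hn, rfl, rfl, by simp, by simp⟩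
    obtain ⟨⟨zb, zl⟩, hz, hzatt⟩ := h _ hatt
    rcases hzatt with ⟨_, _, hcontra, _⟩ | ⟨_, hzb, _, hzl⟩
    · simp at hcontra
    · simp only at hzb hzl
      subst hzb; subst hzl
      exact hz
  · rintro h ⟨yb, yl⟩ hy
    rcases hy with ⟨hyT, hyb, _, hne, hdrop⟩ | ⟨_, _, hcontra, _⟩
    · simp only at hyb hdrop
      subst hyb
      have heq : σ ++ [yl.getLast hne] = yl := by
        rw [hdrop]; exact List.dropLast_append_getLast hne
      refine ⟨(false, yl), ?_, Or.inr ⟨hyT, rfl, rfl, rfl⟩⟩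
      have := h (yl.getLast hne) (by rwa [heq])
      rwa [heq] at this
    · simp at hcontra

/-- In `F_T`, `a_σ ∈ G_{β+1}` iff `σ` is ranked in `T` with rank at most `β`. -/
theorem ft_iter_iff_rank (T : Set (List ℕ)) (hT : IsTree T)
    (G : Ordinal → Set (Bool × List ℕ)) (hG : IsIter (ftAtt T) G)
    (β : Ordinal) (σ : List ℕ) (hσ : σ ∈ T) :
    (false, σ) ∈ G (β + 1) ↔ RankLE T σ β := by
  induction β using Ordinal.induction generalizing σ with
  | _ β IH =>
    rw [hG.2.1 β, defense_char T (G β) σ, rankLE_iff T σ β]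
    constructor
    · intro h n hn
      obtain ⟨γ, hγ, hmem⟩ := mem_succ_of_mem _ G hG β _ (h n hn)
      exact ⟨γ, hγ, (IH γ hγ (σ ++ [n]) hn).mp hmem⟩
    · intro h n hn
      obtain ⟨γ, hγ, hr⟩ := h n hn
      have hmem := (IH γ hγ (σ ++ [n]) hn).mpr hr
      exact G_mono _ G hG β (γ + 1) (by rw [Ordinal.add_one_eq_succ]; exact Order.succ_le_of_lt hγ) hmem
end

section
/- With the tree T_S defined from a finite set S of arguments as above: a finite set S is disjoint from G⁺ (the set of arguments attacked by the grounded extension) if and only if T_S has an infinite path. -/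
/-- `Gr` is the grounded extension: the least fixed point of the defense function. -/
def IsGrounded {A : Type*} (att : A → A → Prop) (Gr : Set A) : Prop :=
  defenseFn att Gr = Gr ∧ ∀ S, defenseFn att S = S → Gr ⊆ S

/-- `π` is an infinite path through the tree `T`. -/
def IsPath (T : Set (List ℕ)) (π : ℕ → ℕ) : Prop :=
  ∀ n : ℕ, (List.ofFn fun i : Fin n => π i) ∈ T

/-- `ran_S(σ) = S ∪ {a_{σ(k)-1} : σ(k) ≥ 1}`. -/
def ranS {A : Type} (a : ℕ → A) (S : Set A) (σ : List ℕ) : Set A :=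
  S ∪ {x | ∃ k : Fin σ.length, 1 ≤ σ.get k ∧ x = a (σ.get k - 1)}

/-- The branching rule of the tree `T_S` at a node `ρ` (with `n` the first
component of the unpairing of `|ρ|`): if `a_n` attacks some element of
`ran_S(ρ)`, the children are the `i+1` with `a_i` attacking `a_n`; otherwise
the unique child is `0`. -/
def stepOK {A : Type} (att : A → A → Prop) (a : ℕ → A) (S : Set A)
    (ρ : List ℕ) (i : ℕ) : Prop :=
  ((∃ x ∈ ranS a S ρ, att (a (Nat.unpair ρ.length).1) x) ∧
      1 ≤ i ∧ att (a (i - 1)) (a (Nat.unpair ρ.length).1)) ∨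
  ((¬ ∃ x ∈ ranS a S ρ, att (a (Nat.unpair ρ.length).1) x) ∧ i = 0)

/-- The tree `T_S`: all finite sequences each of whose steps obeys `stepOK`. -/
def TS {A : Type} (att : A → A → Prop) (a : ℕ → A) (S : Set A) : Set (List ℕ) :=
  {σ | ∀ (ρ : List ℕ) (i : ℕ), ρ ++ [i] <+: σ → stepOK att a S ρ i}

theorem defenseFn_mono' {A : Type} (att : A → A → Prop) :
    Monotone (defenseFn att) := fun _ _ hST _ hx y hy =>
  (hx y hy).imp fun _ ⟨hz, h⟩ => ⟨hST hz, h⟩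

theorem mem_ranS_iff {A : Type} (a : ℕ → A) (S : Set A) (σ : List ℕ) (x : A) :
    x ∈ ranS a S σ ↔ x ∈ S ∨ ∃ m ∈ σ, 1 ≤ m ∧ x = a (m - 1) := by
  constructor
  · rintro (h | ⟨k, h1, h2⟩)
    · exact Or.inl h
    · exact Or.inr ⟨σ.get k, by simp [List.get_mem], h1, h2⟩
  · rintro (h | ⟨m, hm, h1, h2⟩)
    · exact Or.inl h
    · obtain ⟨k, hk⟩ := List.mem_iff_get.1 hm
      exact Or.inr ⟨k, by rw [hk]; exact ⟨h1, h2⟩⟩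

theorem mem_ranS_append {A : Type} (a : ℕ → A) (S : Set A) (σ : List ℕ) (i : ℕ) (x : A) :
    x ∈ ranS a S (σ ++ [i]) ↔ x ∈ ranS a S σ ∨ (1 ≤ i ∧ x = a (i - 1)) := by
  simp only [mem_ranS_iff, List.mem_append, List.mem_singleton]
  constructor
  · rintro (h | ⟨m, hm | rfl, h1, h2⟩)
    · exact Or.inl (Or.inl h)
    · exact Or.inl (Or.inr ⟨m, hm, h1, h2⟩)
    · exact Or.inr ⟨h1, h2⟩
  · rintro ((h | ⟨m, hm, h1, h2⟩) | ⟨h1, h2⟩)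
    · exact Or.inl h
    · exact Or.inr ⟨m, Or.inl hm, h1, h2⟩
    · exact Or.inr ⟨i, Or.inr rfl, h1, h2⟩

/-- A finite set `S` is disjoint from `G⁺` (the set of arguments attacked by
the grounded extension) iff the tree `T_S` has an infinite path. -/
theorem disjoint_Gplus_iff_path {A : Type} (att : A → A → Prop)
    (a : ℕ → A) (ha : Function.Surjective a) (S : Set A) (hS : S.Finite)
    (Gr : Set A) (hGr : IsGrounded att Gr) :
    (∀ x ∈ S, ¬ ∃ g ∈ Gr, att g x) ↔ ∃ π : ℕ → ℕ, IsPath (TS att a S) π := by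
  classical
  obtain ⟨hfix, hleast⟩ := hGr
  constructor
  · -- S disjoint from G⁺ : build a path
    intro h
    set U : Set A := {x | ¬ ∃ g ∈ Gr, att g x} with hUdef
    have hUfix : defenseFn att U = U := by
      ext x
      simp only [hUdef, defenseFn, Set.mem_setOf_eq]
      constructor
      · intro hx hcon
        obtain ⟨g, hg, hgx⟩ := hcon
        obtain ⟨z, hz, hzg⟩ := hx g hgx
        rw [← hfix] at hg
        obtain ⟨w, hw, hwz⟩ := hg z hzg
        exact hz ⟨w, hw, hwz⟩
      · intro hx g hgx
        by_contra hno
        have hgGr : g ∈ Gr := by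
          rw [← hfix]
          intro y hyg
          by_contra hno2
          exact hno ⟨y, hno2, hyg⟩
        exact hx ⟨g, hgGr, hgx⟩
    have hSU : S ⊆ U := fun x hx hc => h x hx hc
    have key : ∀ σ : List ℕ, ∃ i, ranS a S σ ⊆ U →
        (stepOK att a S σ i ∧ ranS a S (σ ++ [i]) ⊆ U) := by
      intro σ
      by_cases hσ : ranS a S σ ⊆ U
      · by_cases hatt : ∃ x ∈ ranS a S σ, att (a (Nat.unpair σ.length).1) x
        · obtain ⟨x, hx, hax⟩ := hatt
          have hxD : x ∈ defenseFn att U := by rw [hUfix]; exact hσ hx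
          obtain ⟨z, hzU, hz⟩ := hxD _ hax
          obtain ⟨j, rfl⟩ := ha z
          refine ⟨j + 1, fun _ => ⟨Or.inl ⟨⟨x, hx, hax⟩, Nat.le_add_left 1 j,
            by simpa using hz⟩, ?_⟩⟩
          intro y hy
          rw [mem_ranS_append] at hy
          rcases hy with hy | ⟨_, rfl⟩
          · exact hσ hy
          · simpa using hzU
        · refine ⟨0, fun _ => ⟨Or.inr ⟨hatt, rfl⟩, ?_⟩⟩
          intro y hy
          rw [mem_ranS_append] at hy
          rcases hy with hy | ⟨h1, _⟩
          · exact hσ hy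
          · omega
      · exact ⟨0, fun hc => absurd hc hσ⟩
    choose step hstep using key
    let f : ℕ → List ℕ := fun n => Nat.rec [] (fun _ σ => σ ++ [step σ]) n
    have hfs : ∀ n, f (n + 1) = f n ++ [step (f n)] := fun n => rfl
    have hinv : ∀ n, ranS a S (f n) ⊆ U ∧ f n ∈ TS att a S := by
      intro n
      induction n with
      | zero =>
        constructor
        · intro x hx
          rw [mem_ranS_iff] at hx
          rcases hx with hx | ⟨m, hm, _⟩
          · exact hSU hx
          · have h0 : f 0 = [] := rfl
            rw [h0] at hm
            simp at hm
        · intro ρ i hpre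
          have h0 : f 0 = [] := rfl
          rw [h0] at hpre
          have := hpre.length_le
          simp at this
      | succ n ih =>
        obtain ⟨ih1, ih2⟩ := ih
        obtain ⟨hOK, hsub⟩ := hstep (f n) ih1
        rw [hfs n]
        refine ⟨hsub, ?_⟩
        intro ρ i hpre
        rw [List.prefix_concat_iff] at hpre
        rcases hpre with heq | hpre
        · obtain ⟨h1, h2⟩ := List.append_inj' heq rfl
          obtain rfl : i = step (f n) := by simpa using h2
          rw [h1]
          exact hOK
        · exact ih2 ρ i hpre
    refine ⟨fun n => step (f n), ?_⟩
    have hofn : ∀ n, (List.ofFn fun i : Fin n => step (f i.val)) = f n := by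
      intro n
      induction n with
      | zero => rfl
      | succ n ih =>
        rw [List.ofFn_succ', List.concat_eq_append, hfs n]
        simp only [Fin.coe_castSucc, Fin.val_last]
        rw [ih]
    intro n
    rw [hofn n]
    exact (hinv n).2
  · -- a path gives disjointness
    rintro ⟨π, hπ⟩
    set X : Set A := S ∪ {x | ∃ ℓ, 1 ≤ π ℓ ∧ x = a (π ℓ - 1)} with hXdef
    have hstepπ : ∀ ℓ, stepOK att a S (List.ofFn fun i : Fin ℓ => π i) (π ℓ) := by
      intro ℓ
      apply hπ (ℓ + 1)
      rw [List.ofFn_succ', List.concat_eq_append]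
      simp only [Fin.coe_castSucc, Fin.val_last]
      exact List.prefix_refl _
    have hXD : X ⊆ defenseFn att X := by
      intro x hx y hyx
      obtain ⟨n, rfl⟩ := ha y
      have hx' : ∃ ℓ₀, ∀ ℓ, ℓ₀ ≤ ℓ → x ∈ ranS a S (List.ofFn fun i : Fin ℓ => π i) := by
        rcases hx with hx | ⟨ℓ₀, h1, h2⟩
        · exact ⟨0, fun ℓ _ => Or.inl hx⟩
        · refine ⟨ℓ₀ + 1, fun ℓ hℓ => ?_⟩
          rw [mem_ranS_iff]
          refine Or.inr ⟨π ℓ₀, ?_, h1, h2⟩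
          rw [List.mem_ofFn]
          exact ⟨⟨ℓ₀, by omega⟩, rfl⟩
      obtain ⟨ℓ₀, hℓ₀⟩ := hx'
      have hx2 := hℓ₀ (Nat.pair n ℓ₀) (Nat.right_le_pair n ℓ₀)
      have hOK := hstepπ (Nat.pair n ℓ₀)
      have hlen : (List.ofFn fun i : Fin (Nat.pair n ℓ₀) => π i).length = Nat.pair n ℓ₀ :=
        List.length_ofFn
      rcases hOK with ⟨_, h1, h2⟩ | ⟨hno, _⟩
      · refine ⟨a (π (Nat.pair n ℓ₀) - 1), Or.inr ⟨Nat.pair n ℓ₀, h1, rfl⟩, ?_⟩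
        rwa [hlen, Nat.unpair_pair] at h2
      · exact absurd ⟨x, hx2, by rw [hlen, Nat.unpair_pair]; exact hyx⟩ hno
    set W : Set A := {g | ∀ x ∈ X, ¬ att g x} with hWdef
    let D : Set A →o Set A := ⟨defenseFn att, defenseFn_mono' att⟩
    have hGle : Gr ⊆ OrderHom.lfp D := hleast _ (OrderHom.map_lfp D)
    have hW : D W ≤ W := by
      intro g hg x hx hgx
      obtain ⟨z, hzX, hzg⟩ := hXD hx g hgx
      obtain ⟨w, hwW, hwz⟩ := hg z hzg
      exact hwW z hzX hwz
    have hfin := hGle.trans (OrderHom.lfp_le D hW)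
    rintro x hx ⟨g, hg, hgx⟩
    exact hfin hg x (Or.inl hx) hgx
end

section
/- Define, for an argument a of a countable AF with enumerated arguments, the tree T^a whose root is the empty string and which contains i⌢σ exactly when a_i attacks a and σ ∈ T_{{a_i}}. Then T^a has an infinite path if and only if a does not belong to the grounded extension; moreover, if T^a is well-founded with rank at most α, then a ∈ G_{α+1}. -/
/-- The tree `T^{arg}`: the root, together with `i :: σ` for `a_i` attacking
`arg` and `σ ∈ T_{{a_i}}`. -/
def Ttop {A : Type} (att : A → A → Prop) (a : ℕ → A) (arg : A) : Set (List ℕ) :=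
  {σ | σ = [] ∨ ∃ (i : ℕ) (τ : List ℕ), σ = i :: τ ∧ att (a i) arg ∧ τ ∈ TS att a {a i}}

/-! ### Auxiliary lemmas -/

universe u

section Basic
variable {A : Type*} (att : A → A → Prop)

theorem aux_defenseFn_mono {S T : Set A} (h : S ⊆ T) : defenseFn att S ⊆ defenseFn att T := by
  intro x hx y hy
  obtain ⟨z, hz, hzy⟩ := hx y hy
  exact ⟨z, h hz, hzy⟩

theorem aux_G_succ_incl {G : Ordinal.{u} → Set A} (hG : IsIter att G) :
    ∀ β : Ordinal, G β ⊆ G (β + 1) := by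
  intro β
  induction β using Ordinal.induction with
  | h β ih =>
    rcases Ordinal.zero_or_succ_or_isSuccLimit β with h0 | ⟨δ, hδ⟩ | hl
    · subst h0; rw [hG.1]; exact Set.empty_subset _
    · rw [← Ordinal.add_one_eq_succ] at hδ; subst hδ
      rw [hG.2.1, hG.2.1]
      exact aux_defenseFn_mono att (ih δ (lt_add_one δ))
    · rw [hG.2.2 β hl, hG.2.1]
      intro x hx
      simp only [Set.mem_iUnion] at hx
      obtain ⟨ε, hε, hx⟩ := hx
      have h1 : x ∈ G (ε + 1) := ih ε hε hx
      rw [hG.2.1] at h1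
      refine aux_defenseFn_mono att ?_ h1
      intro y hy
      rw [hG.2.2 β hl]
      exact Set.mem_biUnion hε hy

theorem aux_G_mono {G : Ordinal.{u} → Set A} (hG : IsIter att G) :
    ∀ {β γ : Ordinal}, β ≤ γ → G β ⊆ G γ := by
  intro β γ
  induction γ using Ordinal.induction with
  | h γ ih =>
    intro hβγ
    rcases eq_or_lt_of_le hβγ with rfl | hlt
    · exact subset_rfl
    rcases Ordinal.zero_or_succ_or_isSuccLimit γ with h0 | ⟨δ, hδ⟩ | hl
    · subst h0; exact absurd hlt (not_lt_of_ge (zero_le (a := β)))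
    · rw [← Ordinal.add_one_eq_succ] at hδ; subst hδ
      have hβδ : β ≤ δ := Order.lt_succ_iff.mp (by rwa [Ordinal.add_one_eq_succ] at hlt)
      exact (ih δ (lt_add_one δ) hβδ).trans (aux_G_succ_incl att hG δ)
    · rw [hG.2.2 γ hl]
      intro x hx
      exact Set.mem_biUnion hlt hx

theorem aux_grounded_le_prefixed {Gr : Set A} (hGr : IsGrounded att Gr)
    {S : Set A} (hS : defenseFn att S ⊆ S) : Gr ⊆ S := by
  set L : Set A := ⋂₀ {T | defenseFn att T ⊆ T} with hL
  have hLpre : defenseFn att L ⊆ L := by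
    intro x hx T hT
    exact hT (aux_defenseFn_mono att (Set.sInter_subset_of_mem hT) hx)
  have hLpost : L ⊆ defenseFn att L :=
    Set.sInter_subset_of_mem (aux_defenseFn_mono att hLpre)
  have : Gr ⊆ L := hGr.2 L (le_antisymm hLpre hLpost)
  exact this.trans (Set.sInter_subset_of_mem hS)

theorem aux_G_le_grounded {G : Ordinal.{u} → Set A} (hG : IsIter att G)
    {Gr : Set A} (hGr : IsGrounded att Gr) : ∀ β, G β ⊆ Gr := by
  intro β
  induction β using Ordinal.induction with
  | h β ih =>
    rcases Ordinal.zero_or_succ_or_isSuccLimit β with h0 | ⟨δ, hδ⟩ | hl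
    · subst h0; rw [hG.1]; exact Set.empty_subset _
    · rw [← Ordinal.add_one_eq_succ] at hδ; subst hδ
      rw [hG.2.1]
      exact (aux_defenseFn_mono att (ih δ (lt_add_one δ))).trans hGr.1.subset
    · rw [hG.2.2 β hl]
      exact Set.iUnion₂_subset fun ε hε => ih ε hε

end Basic

/-! ### List lemmas -/

theorem aux_prefix_concat_cases {α : Type*} {σ τ : List α} {x : α} (h : τ <+: σ ++ [x]) :
    τ = σ ++ [x] ∨ τ <+: σ := by
  rcases eq_or_lt_of_le h.length_le with heq | hlt
  · left
    exact List.IsPrefix.eq_of_length h heq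
  · right
    refine List.prefix_of_prefix_length_le h (σ.prefix_append [x]) ?_
    simpa using Nat.lt_succ_iff.mp (by simpa using hlt)

theorem aux_ranS_nil {A : Type} (a : ℕ → A) (S : Set A) : ranS a S [] = S := by
  ext x
  simp [ranS]

theorem aux_get_concat_lt {α : Type*} (σ : List α) (x : α) (i : ℕ) (hi : i < σ.length) :
    (σ ++ [x]).get ⟨i, by simp; omega⟩ = σ.get ⟨i, hi⟩ := by
  simp [List.getElem_append_left hi]

theorem aux_get_concat_last {α : Type*} (σ : List α) (x : α) :
    (σ ++ [x]).get ⟨σ.length, by simp⟩ = x := by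
  simp

theorem aux_mem_ranS_concat {A : Type} (a : ℕ → A) (S : Set A) (σ : List ℕ) (j : ℕ) (x : A) :
    x ∈ ranS a S (σ ++ [j]) ↔ x ∈ ranS a S σ ∨ (1 ≤ j ∧ x = a (j - 1)) := by
  constructor
  · rintro (hx | ⟨k, hk1, hk2⟩)
    · exact Or.inl (Or.inl hx)
    · rcases lt_or_eq_of_le (Nat.lt_succ_iff.mp (by simpa using k.2)) with hlt | heq
      · left; right
        refine ⟨⟨k.1, hlt⟩, ?_, ?_⟩
        · rwa [show σ.get ⟨k.1, hlt⟩ = (σ ++ [j]).get k by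
            rw [← aux_get_concat_lt σ j k.1 hlt]]
        · rw [hk2]; congr 1; congr 1
          rw [← aux_get_concat_lt σ j k.1 hlt]
      · right
        have : (σ ++ [j]).get k = j := by
          rw [show k = ⟨σ.length, by simp⟩ from Fin.ext (by simp [← heq])]
          exact aux_get_concat_last σ j
        rw [this] at hk1 hk2
        exact ⟨hk1, hk2⟩
  · rintro ((hx | ⟨k, hk1, hk2⟩) | ⟨hj, hx⟩)
    · exact Or.inl hx
    · right
      refine ⟨⟨k.1, by simp⟩, ?_⟩
      rw [show (σ ++ [j]).get ⟨k.1, by simp⟩ = σ.get k from aux_get_concat_lt σ j k.1 k.2]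
      exact ⟨hk1, hk2⟩
    · right
      exact ⟨⟨σ.length, by simp⟩, by rw [aux_get_concat_last]; exact ⟨hj, hx⟩⟩

theorem aux_ranS_prefix_mono {A : Type} (a : ℕ → A) (S : Set A) {σ τ : List ℕ}
    (h : σ <+: τ) : ranS a S σ ⊆ ranS a S τ := by
  rintro x (hx | ⟨k, hk1, hk2⟩)
  · exact Or.inl hx
  · right
    refine ⟨⟨k.1, k.2.trans_le h.length_le⟩, ?_⟩
    rw [List.get_eq_getElem, ← List.IsPrefix.getElem h k.2]
    exact ⟨hk1, hk2⟩

/-! ### TS tree lemmas -/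

section TSlemmas
variable {A : Type} (att : A → A → Prop) (a : ℕ → A) (S : Set A)

theorem aux_nil_mem_TS : [] ∈ TS att a S := by
  intro ρ i h
  have := h.length_le
  simp at this

theorem aux_TS_concat {σ : List ℕ} (hσ : σ ∈ TS att a S) {i : ℕ}
    (hstep : stepOK att a S σ i) : σ ++ [i] ∈ TS att a S := by
  intro ρ j h
  rcases aux_prefix_concat_cases h with heq | hpre
  · obtain ⟨h1, h2⟩ := List.append_inj' heq rfl
    obtain rfl : j = i := by simpa using h2
    rw [h1]; exact hstep
  · exact hσ ρ j hpre

theorem aux_TS_rank {G : Ordinal.{u} → Set A} (hG : IsIter att G) (ha : Function.Surjective a) :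
    ∀ {σ : List ℕ} {β : Ordinal}, RankLE (TS att a S) σ β → σ ∈ TS att a S →
      ∃ x ∈ ranS a S σ, ∃ w ∈ G (β + 1), att w x := by
  intro σ β hr
  induction hr with
  | intro σ β g hlt h ih =>
    intro hσ
    have hsucc : ∀ {k : ℕ}, σ ++ [k] ∈ TS att a S → G (g k + 1) ⊆ G β := by
      intro k hk
      refine aux_G_mono att hG ?_
      rw [Ordinal.add_one_eq_succ]
      exact Order.succ_le_of_lt (hlt k hk)
    by_cases hatt : ∃ x ∈ ranS a S σ, att (a (Nat.unpair σ.length).1) x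
    · by_cases hdone : ∃ x ∈ ranS a S σ, ∃ w ∈ G β, att w x
      · obtain ⟨x, hx, w, hw, hwx⟩ := hdone
        exact ⟨x, hx, w, aux_G_mono att hG (le_of_lt (lt_add_one β)) hw, hwx⟩
      · obtain ⟨x₀, hx₀, hax₀⟩ := hatt
        refine ⟨x₀, hx₀, a (Nat.unpair σ.length).1, ?_, hax₀⟩
        rw [hG.2.1]
        intro u hu
        obtain ⟨i, rfl⟩ := ha u
        have hstep : stepOK att a S σ (i + 1) :=
          Or.inl ⟨⟨x₀, hx₀, hax₀⟩, Nat.le_add_left 1 i, by simpa using hu⟩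
        have hmem := aux_TS_concat att a S hσ hstep
        obtain ⟨x, hx, w, hw, hwx⟩ := ih (i + 1) hmem hmem
        rcases (aux_mem_ranS_concat a S σ (i + 1) x).mp hx with hx' | ⟨-, rfl⟩
        · exact absurd ⟨x, hx', w, hsucc hmem hw, hwx⟩ hdone
        · exact ⟨w, hsucc hmem hw, by simpa using hwx⟩
    · have hstep : stepOK att a S σ 0 := Or.inr ⟨hatt, rfl⟩
      have hmem := aux_TS_concat att a S hσ hstep
      obtain ⟨x, hx, w, hw, hwx⟩ := ih 0 hmem hmem
      rcases (aux_mem_ranS_concat a S σ 0 x).mp hx with hx' | ⟨h1, -⟩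
      · exact ⟨x, hx', w, aux_G_mono att hG (le_of_lt (lt_add_one β)) (hsucc hmem hw), hwx⟩
      · omega

theorem aux_Ttop_rank_translate {arg : A} {i : ℕ} (hatt : att (a i) arg) :
    ∀ {τ : List ℕ} {β : Ordinal.{u}}, RankLE (Ttop att a arg) (i :: τ) β →
      RankLE (TS att a {a i}) τ β := by
  suffices H : ∀ (σ : List ℕ) (β : Ordinal.{u}), RankLE (Ttop att a arg) σ β →
      ∀ τ, σ = i :: τ → RankLE (TS att a {a i}) τ β by
    intro τ β hr
    exact H _ _ hr τ rfl
  intro σ β hr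
  induction hr with
  | intro σ β g hlt h ih =>
    rintro τ rfl
    have hmem : ∀ n : ℕ, τ ++ [n] ∈ TS att a {a i} → (i :: τ) ++ [n] ∈ Ttop att a arg :=
      fun n hn => Or.inr ⟨i, τ ++ [n], rfl, hatt, hn⟩
    exact RankLE.intro τ β g (fun n hn => hlt n (hmem n hn))
      (fun n hn => ih n (hmem n hn) (τ ++ [n]) rfl)

end TSlemmas

/-! ### Ranked trees without paths -/

theorem aux_ranked_of_children {T : Set (List ℕ)} {σ : List ℕ}
    (h : ∀ n, σ ++ [n] ∈ T → ∃ β : Ordinal.{u}, RankLE T (σ ++ [n]) β) :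
    ∃ β : Ordinal.{u}, RankLE T σ β := by
  classical
  choose g hg using fun n (hn : σ ++ [n] ∈ T) => h n hn
  set g' : ℕ → Ordinal := fun n => if hn : σ ++ [n] ∈ T then g n hn else 0 with hg'
  refine ⟨(⨆ n, g' n) + 1, RankLE.intro σ _ g' (fun n hn => ?_) (fun n hn => ?_)⟩
  · exact (Ordinal.le_iSup g' n).trans_lt (lt_add_one _)
  · simpa [hg', hn] using hg n hn

theorem aux_exists_path_of_not_ranked {T : Set (List ℕ)} (hnil : [] ∈ T)
    (h : ¬ ∃ β : Ordinal.{u}, RankLE T [] β) : ∃ π : ℕ → ℕ, IsPath T π := by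
  classical
  set Bad : Set (List ℕ) := {σ | σ ∈ T ∧ ¬ ∃ β : Ordinal.{u}, RankLE T σ β} with hBad
  have key : ∀ σ ∈ Bad, ∃ n, σ ++ [n] ∈ Bad := by
    intro σ hσ
    by_contra hcon
    push_neg at hcon
    refine hσ.2 (aux_ranked_of_children.{u} fun n hn => ?_)
    have := hcon n
    simp only [hBad, Set.mem_setOf_eq, not_and, not_not] at this
    exact this hn
  have hroot : [] ∈ Bad := ⟨hnil, h⟩
  set F : Bad → Bad := fun p =>
    ⟨p.1 ++ [Classical.choose (key p.1 p.2)], Classical.choose_spec (key p.1 p.2)⟩ with hF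
  set u : ℕ → Bad := fun n => F^[n] ⟨[], hroot⟩ with hu
  have hustep : ∀ n, (u (n + 1)).1 = (u n).1 ++ [Classical.choose (key (u n).1 (u n).2)] := by
    intro n
    rw [hu]
    simp only [Function.iterate_succ_apply']
    rfl
  set π : ℕ → ℕ := fun n => (u (n + 1)).1.getLastD 0 with hπ
  have hπ' : ∀ n, π n = Classical.choose (key (u n).1 (u n).2) := by
    intro n
    rw [hπ]; simp only [hustep n]
    exact List.getLastD_concat
  have hofn : ∀ n, (List.ofFn fun i : Fin n => π i) = (u n).1 := by
    intro n
    induction n with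
    | zero => simp [hu]
    | succ n ih =>
      rw [List.ofFn_succ']
      simp only [List.concat_eq_append, Fin.coe_castSucc, Fin.val_last]
      rw [show (List.ofFn fun i : Fin n => π i.1) = (u n).1 from ih, hustep n, hπ' n]
  exact ⟨π, fun n => by rw [hofn n]; exact (u n).2.1⟩

/-! ### Paths through TS and the grounded extension -/

section PathLemmas
variable {A : Type} (att : A → A → Prop) (a : ℕ → A) (S : Set A)

theorem aux_TS_path_not_attacked (ha : Function.Surjective a) {Gr : Set A}
    (hGr : IsGrounded att Gr) {π : ℕ → ℕ} (hπ : IsPath (TS att a S) π) :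
    ∀ s ∈ S, ∀ w ∈ Gr, ¬ att w s := by
  set p : ℕ → List ℕ := fun n => List.ofFn (fun i : Fin n => π i) with hp
  have hstep : ∀ n, p (n + 1) = p n ++ [π n] := by
    intro n
    rw [hp]
    simp only [List.ofFn_succ', List.concat_eq_append, Fin.coe_castSucc, Fin.val_last]
  have hpre : ∀ m n, m ≤ n → p m <+: p n := by
    intro m n h
    induction h with
    | refl => exact List.prefix_rfl
    | @step k hk ih =>
      rw [hstep k]
      exact ih.trans (List.prefix_append _ _)
  have hlen : ∀ n, (p n).length = n := by intro n; simp [hp]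
  set E : Set A := ⋃ n, ranS a S (p n) with hE
  have hdef : ∀ x ∈ E, ∀ n₀ : ℕ, att (a n₀) x → ∃ z ∈ E, att z (a n₀) := by
    intro x hx n₀ hatx
    rw [hE] at hx; simp only [Set.mem_iUnion] at hx
    obtain ⟨N, hN⟩ := hx
    set ℓ := Nat.pair n₀ N with hℓ
    have hNℓ : N ≤ ℓ := Nat.right_le_pair n₀ N
    have hxℓ : x ∈ ranS a S (p ℓ) := aux_ranS_prefix_mono a S (hpre N ℓ hNℓ) hN
    have hun : (Nat.unpair (p ℓ).length).1 = n₀ := by rw [hlen ℓ, hℓ, Nat.unpair_pair]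
    have hstepOK : stepOK att a S (p ℓ) (π ℓ) := by
      have hmem := hπ (ℓ + 1)
      rw [show (List.ofFn fun i : Fin (ℓ + 1) => π i) = p (ℓ + 1) from rfl, hstep ℓ] at hmem
      exact hmem (p ℓ) (π ℓ) List.prefix_rfl
    rcases hstepOK with ⟨hex, h1, h2⟩ | ⟨hnex, -⟩
    · refine ⟨a (π ℓ - 1), ?_, by rwa [hun] at h2⟩
      rw [hE]; simp only [Set.mem_iUnion]
      exact ⟨ℓ + 1, by
        rw [hstep ℓ]
        exact (aux_mem_ranS_concat a S (p ℓ) (π ℓ) _).mpr (Or.inr ⟨h1, rfl⟩)⟩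
    · exact absurd ⟨x, hxℓ, by rwa [hun]⟩ hnex
  have hNpre : defenseFn att {y | ∀ x ∈ E, ¬ att y x} ⊆ {y | ∀ x ∈ E, ¬ att y x} := by
    intro y hy x hx hyx
    obtain ⟨n₀, rfl⟩ := ha y
    obtain ⟨z, hz, hzy⟩ := hdef x hx n₀ hyx
    obtain ⟨w, hw, hwz⟩ := hy z hzy
    exact hw z hz hwz
  intro s hs w hw hws
  have hsE : s ∈ E := by
    rw [hE]; simp only [Set.mem_iUnion]
    exact ⟨0, by
      rw [show p 0 = ([] : List ℕ) from by simp [hp], aux_ranS_nil]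
      exact hs⟩
  exact aux_grounded_le_prefixed att hGr hNpre hw s hsE hws

theorem aux_rank_main (ha : Function.Surjective a) {arg : A}
    {G : Ordinal.{u} → Set A} (hG : IsIter att G) :
    ∀ α : Ordinal.{u}, RankLE (Ttop att a arg) [] α → arg ∈ G (α + 1) := by
  intro α hr
  rw [hG.2.1]
  intro y hy
  obtain ⟨i, rfl⟩ := ha y
  cases hr with
  | intro _ _ g hlt h =>
    have hchild : ([] : List ℕ) ++ [i] ∈ Ttop att a arg :=
      Or.inr ⟨i, [], rfl, hy, aux_nil_mem_TS att a {a i}⟩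
    have hri : RankLE (Ttop att a arg) ([i]) (g i) := by simpa using h i hchild
    have hlt' : g i < α := hlt i hchild
    have htr : RankLE (TS att a {a i}) [] (g i) :=
      aux_Ttop_rank_translate att a hy (show RankLE (Ttop att a arg) (i :: []) (g i) from hri)
    obtain ⟨x, hx, w, hw, hwx⟩ :=
      aux_TS_rank att a {a i} hG ha htr (aux_nil_mem_TS att a {a i})
    rw [aux_ranS_nil] at hx
    refine ⟨w, aux_G_mono att hG ?_ hw, ?_⟩
    · rw [Ordinal.add_one_eq_succ]
      exact Order.succ_le_of_lt hlt'
    · rw [Set.mem_singleton_iff] at hx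
      rw [← hx]
      exact hwx

end PathLemmas

/-- `T^{arg}` has an infinite path iff `arg` is not in the grounded extension;
moreover if `T^{arg}` is well-founded with rank at most `α` then `arg ∈ G_{α+1}`. -/
theorem Ttop_path_iff_not_grounded {A : Type} (att : A → A → Prop)
    (a : ℕ → A) (ha : Function.Surjective a) (arg : A)
    (G : Ordinal → Set A) (hG : IsIter att G)
    (Gr : Set A) (hGr : IsGrounded att Gr) :
    ((∃ π : ℕ → ℕ, IsPath (Ttop att a arg) π) ↔ arg ∉ Gr) ∧
      ∀ α : Ordinal, RankLE (Ttop att a arg) [] α → arg ∈ G (α + 1) := by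
  refine ⟨⟨?_, ?_⟩, fun α hα => aux_rank_main att a ha hG α hα⟩
  · rintro ⟨π, hπ⟩ harg
    -- the first entry of the path names an attacker of `arg`
    have h1 : (List.ofFn fun i : Fin 1 => π i) ∈ Ttop att a arg := hπ 1
    have he1 : (List.ofFn fun i : Fin 1 => π i) = [π 0] := by simp
    rw [he1] at h1
    rcases h1 with h1 | ⟨i, τ, heq, hatt, hτ⟩
    · simp at h1
    obtain ⟨rfl, rfl⟩ := List.cons_eq_cons.mp heq
    -- the tail of the path is a path through `TS att a {a (π 0)}`
    have hpath' : IsPath (TS att a {a (π 0)}) (fun n => π (n + 1)) := by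
      intro n
      have h2 := hπ (n + 1)
      rw [List.ofFn_succ] at h2
      simp only [Fin.val_succ, Fin.val_zero] at h2
      rcases h2 with h2 | ⟨i', τ', heq', hatt', hτ'⟩
      · exact absurd h2 (by simp)
      obtain ⟨h3, h4⟩ := List.cons_eq_cons.mp heq'
      rw [← h3] at hτ'
      rw [← h4] at hτ'
      exact hτ'
    have hnoatt := aux_TS_path_not_attacked att a {a (π 0)} ha hGr hpath'
      (a (π 0)) rfl
    rw [← hGr.1] at harg
    obtain ⟨z, hz, hzi⟩ := harg (a (π 0)) hatt
    exact hnoatt z hz hzi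
  · intro harg
    by_contra hnopath
    apply harg
    have hnil : [] ∈ Ttop att a arg := Or.inl rfl
    have hranked : ∃ β : Ordinal, RankLE (Ttop att a arg) [] β := by
      by_contra h'
      exact hnopath (aux_exists_path_of_not_ranked hnil h')
    obtain ⟨β, hβ⟩ := hranked
    exact aux_G_le_grounded att hG hGr (β + 1) (aux_rank_main att a ha hG β hβ)
end
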